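/- Let z(t) = α(z_0, t) denote the solution curve through z_0 and let v(t) ∈ L(ℝ^{n_z}, ℝ^{n_z}) be the Fréchet derivative of w ↦ α(w, t) at z_0 (the sensitivity of the flow to its initial condition). Then v satisfies the linear matrix-valued initial value problem v(s) = I (the identity map) and v′(t) = Df(t, z(t)) ∘ v(t) for all t ∈ [s, T], where Df(t, z) denotes the Fréchet derivative of z ↦ f(t, z). -/

import Mathlib

open Set MeasureTheory Metric

/-- **Forward sensitivity.**
Let `α` be the flow of `ż = f(t, z)` on a neighborhood `U` of `z0` over `[s, T]`,
jointly continuously differentiable. Then the sensitivity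
`v t = D_w α(w, t) |_{w = z0}` satisfies `v s = id` and the linear matrix-valued
variational equation `v' t = Df(t, z t) ∘ v t` on `[s, T]`, where `z t = α z0 t`. -/
theorem forward_sensitivity
    (nz : ℕ)
    (f : ℝ → EuclideanSpace ℝ (Fin nz) → EuclideanSpace ℝ (Fin nz))
    (hf : ContDiff ℝ 1 (fun p : ℝ × EuclideanSpace ℝ (Fin nz) => f p.1 p.2))
    (s T : ℝ) (hsT : s < T)
    (U : Set (EuclideanSpace ℝ (Fin nz))) (hU : IsOpen U)
    (z0 : EuclideanSpace ℝ (Fin nz)) (hz0 : z0 ∈ U)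
    (α : EuclideanSpace ℝ (Fin nz) → ℝ → EuclideanSpace ℝ (Fin nz))
    (hinit : ∀ w ∈ U, α w s = w)
    (hflow : ∀ w ∈ U, ∀ t ∈ Icc s T,
      HasDerivWithinAt (α w) (f t (α w t)) (Icc s T) t)
    (hsmooth : ContDiffOn ℝ 1
      (fun p : EuclideanSpace ℝ (Fin nz) × ℝ => α p.1 p.2) (U ×ˢ Icc s T)) :
    fderiv ℝ (fun w => α w s) z0
        = ContinuousLinearMap.id ℝ (EuclideanSpace ℝ (Fin nz)) ∧
    ∀ t ∈ Icc s T,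
      HasDerivWithinAt (fun τ => fderiv ℝ (fun w => α w τ) z0)
        ((fderiv ℝ (fun z => f t z) (α z0 t)).comp
          (fderiv ℝ (fun w => α w t) z0))
        (Icc s T) t := by
  set S : Set (EuclideanSpace ℝ (Fin nz) × ℝ) := U ×ˢ Icc s T with hSdef
  set αf : EuclideanSpace ℝ (Fin nz) × ℝ → EuclideanSpace ℝ (Fin nz) := fun p => α p.1 p.2 with hαfdef
  have huniq : UniqueDiffOn ℝ S := hU.uniqueDiffOn.prod (uniqueDiffOn_Icc hsT)
  set W : EuclideanSpace ℝ (Fin nz) × ℝ → (EuclideanSpace ℝ (Fin nz) →L[ℝ] EuclideanSpace ℝ (Fin nz)) :=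
    fun p => (fderivWithin ℝ αf S p).comp (ContinuousLinearMap.inl ℝ (EuclideanSpace ℝ (Fin nz)) ℝ) with hWdef
  have hWcont : ContinuousOn W S :=
    (hsmooth.continuousOn_fderivWithin huniq le_rfl).clm_comp continuousOn_const
  -- the partial derivative of the flow in the initial condition is `W`
  have hW : ∀ x ∈ U, ∀ τ ∈ Icc s T, HasFDerivAt (fun w => α w τ) (W (x, τ)) x := by
    intro x hx τ hτ
    have h1 : HasFDerivWithinAt αf (fderivWithin ℝ αf S (x, τ)) S (x, τ) :=
      ((hsmooth.differentiableOn one_ne_zero) (x, τ) ⟨hx, hτ⟩).hasFDerivWithinAt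
    have h2 : HasFDerivWithinAt (fun w : EuclideanSpace ℝ (Fin nz) => (w, τ))
        (ContinuousLinearMap.inl ℝ (EuclideanSpace ℝ (Fin nz)) ℝ) U x :=
      (hasFDerivAt_prodMk_left x τ).hasFDerivWithinAt
    have h3 := h1.comp x h2 (show MapsTo (fun w : EuclideanSpace ℝ (Fin nz) => (w, τ)) U S from fun w hw => ⟨hw, hτ⟩)
    exact (h3.hasFDerivAt (hU.mem_nhds hx))
  have hvW : ∀ τ ∈ Icc s T, fderiv ℝ (fun w => α w τ) z0 = W (z0, τ) :=
    fun τ hτ => (hW z0 hz0 τ hτ).fderiv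
  -- derivative of `f` in the space variable
  set Df := fderiv ℝ (fun p : ℝ × EuclideanSpace ℝ (Fin nz) => f p.1 p.2) with hDfdef
  have hDfc : Continuous Df := hf.continuous_fderiv one_ne_zero
  have hfd : ∀ t : ℝ, ∀ z : EuclideanSpace ℝ (Fin nz), HasFDerivAt (fun z => f t z)
      ((Df (t, z)).comp (ContinuousLinearMap.inr ℝ ℝ (EuclideanSpace ℝ (Fin nz)))) z := by
    intro t z
    have h1 : HasFDerivAt (fun p : ℝ × EuclideanSpace ℝ (Fin nz) => f p.1 p.2) (Df (t, z)) (t, z) :=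
      (hf.differentiable one_ne_zero (t, z)).hasFDerivAt
    have h2 : HasFDerivAt (fun z : EuclideanSpace ℝ (Fin nz) => ((t, z) : ℝ × EuclideanSpace ℝ (Fin nz)))
        (ContinuousLinearMap.inr ℝ ℝ (EuclideanSpace ℝ (Fin nz))) z := hasFDerivAt_prodMk_right t z
    exact h1.comp z h2
  have hAeq : ∀ t : ℝ, fderiv ℝ (fun z => f t z) (α z0 t)
      = (Df (t, α z0 t)).comp (ContinuousLinearMap.inr ℝ ℝ (EuclideanSpace ℝ (Fin nz))) :=
    fun t => (hfd t (α z0 t)).fderiv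
  -- basic continuity facts
  have hαw : ∀ w ∈ U, ContinuousOn (α w) (Icc s T) :=
    fun w hw τ hτ => (hflow w hw τ hτ).continuousWithinAt
  have hfa : ∀ w ∈ U, ContinuousOn (fun τ => f τ (α w τ)) (Icc s T) := fun w hw =>
    hf.continuous.comp_continuousOn (continuousOn_id.prodMk (hαw w hw))
  -- the integral equation for the flow
  have hIE : ∀ w ∈ U, ∀ t ∈ Icc s T, α w t = w + ∫ τ in s..t, f τ (α w τ) := by
    intro w hw t ht
    have hsub : Icc s t ⊆ Icc s T := Icc_subset_Icc le_rfl ht.2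
    have hcont := (hαw w hw).mono hsub
    have hderiv : ∀ x ∈ Ioo s t, HasDerivWithinAt (α w) (f x (α w x)) (Ioi x) x := by
      intro x hx
      have hx' : x ∈ Icc s T := ⟨hx.1.le, (hx.2.le.trans ht.2)⟩
      have hmem : Icc s T ∈ nhds x := Icc_mem_nhds hx.1 (lt_of_lt_of_le hx.2 ht.2)
      exact ((hflow w hw x hx').hasDerivAt hmem).hasDerivWithinAt
    have hint : IntervalIntegrable (fun τ => f τ (α w τ)) volume s t := by
      apply ContinuousOn.intervalIntegrable
      rw [uIcc_of_le ht.1]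
      exact (hfa w hw).mono hsub
    have heq := intervalIntegral.integral_eq_sub_of_hasDeriv_right_of_le ht.1 hcont hderiv hint
    rw [heq, hinit w hw]
    abel
  -- a closed ball inside `U`
  obtain ⟨r0, hr0, hball0⟩ := Metric.isOpen_iff.1 hU z0 hz0
  set r : ℝ := r0 / 2 with hrdef
  have hr : 0 < r := by positivity
  have hball : closedBall z0 r ⊆ U := by
    refine subset_trans ?_ hball0
    intro x hx
    have : r < r0 := by simp [hrdef]; linarith
    exact lt_of_le_of_lt (mem_closedBall.1 hx) this
  -- the full derivative of `w ↦ f τ (α w τ)`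
  set F' : EuclideanSpace ℝ (Fin nz) → ℝ → (EuclideanSpace ℝ (Fin nz) →L[ℝ] EuclideanSpace ℝ (Fin nz)) := fun x τ =>
    ((Df (τ, α x τ)).comp (ContinuousLinearMap.inr ℝ ℝ (EuclideanSpace ℝ (Fin nz)))).comp (W (x, τ)) with hF'def
  set B : ℝ → (EuclideanSpace ℝ (Fin nz) →L[ℝ] EuclideanSpace ℝ (Fin nz)) := fun τ => F' z0 τ with hBdef
  have hcontF' : ContinuousOn (fun p : EuclideanSpace ℝ (Fin nz) × ℝ => F' p.1 p.2) S := by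
    have h1 : ContinuousOn (fun p : EuclideanSpace ℝ (Fin nz) × ℝ => Df (p.2, αf p)) S :=
      hDfc.comp_continuousOn (continuous_snd.continuousOn.prodMk hsmooth.continuousOn)
    have h2 : ContinuousOn
        (fun p : EuclideanSpace ℝ (Fin nz) × ℝ => (Df (p.2, αf p)).comp (ContinuousLinearMap.inr ℝ ℝ (EuclideanSpace ℝ (Fin nz)))) S :=
      h1.clm_comp continuousOn_const
    exact h2.clm_comp hWcont
  have hBcont : ContinuousOn B (Icc s T) := by
    have hmap : MapsTo (fun τ : ℝ => ((z0, τ) : EuclideanSpace ℝ (Fin nz) × ℝ)) (Icc s T) S :=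
      fun τ hτ => ⟨hz0, hτ⟩
    exact hcontF'.comp (continuousOn_const.prodMk continuousOn_id) hmap
  -- differentiate the integral equation in the initial condition
  have hWeq : ∀ t ∈ Icc s T, W (z0, t)
      = ContinuousLinearMap.id ℝ (EuclideanSpace ℝ (Fin nz)) + ∫ τ in s..t, B τ := by
    intro t ht
    have hIoc : uIoc s t ⊆ Icc s T := by
      rw [uIoc_of_le ht.1]
      exact Ioc_subset_Icc_self.trans (Icc_subset_Icc le_rfl ht.2)
    have hmeasset : MeasurableSet (uIoc s t) := measurableSet_uIoc
    have hKS : closedBall z0 r ×ˢ Icc s T ⊆ S :=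
      prod_mono hball (subset_refl _)
    obtain ⟨C, hC⟩ := ((isCompact_closedBall z0 r).prod
      isCompact_Icc).exists_bound_of_continuousOn (hcontF'.mono hKS)
    have key : HasFDerivAt (fun x => ∫ τ in s..t, f τ (α x τ))
        (∫ τ in s..t, F' z0 τ) z0 := by
      apply intervalIntegral.hasFDerivAt_integral_of_dominated_of_fderiv_le
        (bound := fun _ => C) (ball_mem_nhds z0 hr)
      · filter_upwards [hU.mem_nhds hz0] with x hx
        exact ((hfa x hx).mono hIoc).aestronglyMeasurable hmeasset
      · apply ContinuousOn.intervalIntegrable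
        rw [uIcc_of_le ht.1]
        exact (hfa z0 hz0).mono (Icc_subset_Icc le_rfl ht.2)
      · have : ContinuousOn (fun τ => F' z0 τ) (Icc s T) := hBcont
        exact ((this.mono hIoc)).aestronglyMeasurable hmeasset
      · refine Filter.Eventually.of_forall (fun τ hτ x hx => ?_)
        exact hC (x, τ) ⟨ball_subset_closedBall hx, hIoc hτ⟩
      · exact intervalIntegrable_const
      · refine Filter.Eventually.of_forall (fun τ hτ x hx => ?_)
        have hxU : x ∈ U := hball (ball_subset_closedBall hx)
        exact (hfd τ (α x τ)).comp x (hW x hxU τ (hIoc hτ))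
    have heq : (fun w => α w t) =ᶠ[nhds z0]
        fun w => w + ∫ τ in s..t, f τ (α w τ) := by
      filter_upwards [hU.mem_nhds hz0] with w hw using hIE w hw t ht
    have hrhs : HasFDerivAt (fun w : EuclideanSpace ℝ (Fin nz) => w + ∫ τ in s..t, f τ (α w τ))
        (ContinuousLinearMap.id ℝ (EuclideanSpace ℝ (Fin nz)) + ∫ τ in s..t, F' z0 τ) z0 :=
      (hasFDerivAt_id z0).add key
    have hlhs : HasFDerivAt (fun w => α w t)
        (ContinuousLinearMap.id ℝ (EuclideanSpace ℝ (Fin nz)) + ∫ τ in s..t, F' z0 τ) z0 :=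
      hrhs.congr_of_eventuallyEq heq
    exact (hW z0 hz0 t ht).unique hlhs
  constructor
  · have heq : (fun w => α w s) =ᶠ[nhds z0] id := by
      filter_upwards [hU.mem_nhds hz0] with w hw using hinit w hw
    rw [heq.fderiv_eq, fderiv_id]
  · intro t ht
    haveI : Fact (t ∈ Icc s T) := ⟨ht⟩
    have hint : IntervalIntegrable B volume s t := by
      apply ContinuousOn.intervalIntegrable
      rw [uIcc_of_le ht.1]
      exact hBcont.mono (Icc_subset_Icc le_rfl ht.2)
    have hmeas : StronglyMeasurableAtFilter B (nhdsWithin t (Icc s T)) volume :=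
      hBcont.stronglyMeasurableAtFilter_nhdsWithin measurableSet_Icc t
    have hgd : HasDerivWithinAt (fun u => ∫ τ in s..u, B τ) (B t) (Icc s T) t :=
      intervalIntegral.integral_hasDerivWithinAt_right hint hmeas (hBcont t ht)
    have hgd' : HasDerivWithinAt
        (fun u => ContinuousLinearMap.id ℝ (EuclideanSpace ℝ (Fin nz)) + ∫ τ in s..u, B τ) (B t) (Icc s T) t :=
      hgd.const_add _
    have hfinal : HasDerivWithinAt (fun τ => fderiv ℝ (fun w => α w τ) z0)
        (B t) (Icc s T) t := by
      refine hgd'.congr (fun y hy => ?_) ?_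
      · rw [hvW y hy, hWeq y hy]
      · rw [hvW t ht, hWeq t ht]
    have hderiv_eq : (fderiv ℝ (fun z => f t z) (α z0 t)).comp
        (fderiv ℝ (fun w => α w t) z0) = B t := by
      rw [hAeq t, hvW t ht]
    rw [hderiv_eq]
    exact hfinal
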